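/- Let A, B be positive definite n×n complex matrices, let C be an invertible self-adjoint n×n matrix, and let S(X|Y) = X^(1/2) · log(X^(-1/2) Y X^(-1/2)) · X^(1/2). Then S(CAC | CBC) = C · S(A|B) · C. -/

import Mathlib

open Matrix
open scoped ComplexOrder

attribute [local instance] Matrix.frobeniusNormedAddCommGroup Matrix.frobeniusNormedSpace

/-- Matrix logarithm via the continuous functional calculus (spectral theorem). -/
noncomputable def mlog {n : Type*} [Fintype n] [DecidableEq n] (A : Matrix n n ℂ) :
    Matrix n n ℂ := cfc Real.log A

/-- Real power of a matrix via the continuous functional calculus (spectral theorem). -/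
noncomputable def mpow {n : Type*} [Fintype n] [DecidableEq n] (A : Matrix n n ℂ) (r : ℝ) :
    Matrix n n ℂ := cfc (fun x : ℝ => x ^ r) A

section aux
variable {n : Type*} [Fintype n] [DecidableEq n]

private lemma spectrum_pos' {Q : Matrix n n ℂ} (hQ : Q.PosDef) : ∀ x ∈ spectrum ℝ Q, 0 < x := by
  intro x hx
  rw [Matrix.IsHermitian.spectrum_real_eq_range_eigenvalues hQ.isHermitian] at hx
  obtain ⟨i, rfl⟩ := hx
  exact hQ.eigenvalues_pos i

private lemma contOn_rpow' {Q : Matrix n n ℂ} (hQ : Q.PosDef) (r : ℝ) :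
    ContinuousOn (fun x : ℝ => x ^ r) (spectrum ℝ Q) := fun x hx =>
  (Real.continuousAt_rpow_const x r (Or.inl (spectrum_pos' hQ x hx).ne')).continuousWithinAt

private lemma mpow_isSelfAdjoint (Q : Matrix n n ℂ) (r : ℝ) : IsSelfAdjoint (mpow Q r) :=
  cfc_predicate _ _

private lemma mpow_add' {Q : Matrix n n ℂ} (hQ : Q.PosDef) (r s : ℝ) :
    mpow Q r * mpow Q s = mpow Q (r + s) := by
  unfold mpow
  rw [← cfc_mul _ _ Q (contOn_rpow' hQ r) (contOn_rpow' hQ s)]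
  exact cfc_congr fun x hx => (Real.rpow_add (spectrum_pos' hQ x hx) r s).symm

private lemma mpow_zero' {Q : Matrix n n ℂ} (hQ : Q.PosDef) : mpow Q 0 = 1 := by
  unfold mpow
  have : IsSelfAdjoint Q := hQ.isHermitian
  rw [cfc_congr (g := fun _ : ℝ => (1:ℝ)) fun x _ => Real.rpow_zero x, cfc_const_one ℝ Q]

private lemma mpow_one' {Q : Matrix n n ℂ} (hQ : Q.PosDef) : mpow Q 1 = Q := by
  unfold mpow
  have : IsSelfAdjoint Q := hQ.isHermitian
  rw [cfc_congr (g := fun x : ℝ => x) fun x _ => Real.rpow_one x, cfc_id' ℝ Q]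

private lemma posDef_conj' {Q S : Matrix n n ℂ} (hQ : Q.PosDef) (hS : IsUnit S) :
    (Sᴴ * Q * S).PosDef := by
  refine Matrix.PosDef.of_dotProduct_mulVec_pos (Matrix.isHermitian_conjTranspose_mul_mul S hQ.isHermitian) fun x hx => ?_
  have hx' : S *ᵥ x ≠ 0 := by
    intro h
    exact hx <| (Matrix.mulVec_injective_iff_isUnit.mpr hS) (by simpa using h)
  simpa only [star_mulVec, dotProduct_mulVec, vecMul_vecMul] using hQ.dotProduct_mulVec_pos hx'

/-- Conjugation by a unitary as a star algebra homomorphism. -/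
private noncomputable def conjSAH (U : Matrix n n ℂ) (hU : star U * U = 1)
    (hU' : U * star U = 1) : Matrix n n ℂ →⋆ₐ[ℂ] Matrix n n ℂ where
  toFun x := star U * x * U
  map_one' := by simp only [mul_one]; exact hU
  map_mul' x y := by
    simp only [mul_assoc]
    rw [← mul_assoc U (star U) (y * U), hU', one_mul]
  map_zero' := by simp
  map_add' x y := by simp [mul_add, add_mul]
  commutes' c := by
    show star U * algebraMap ℂ (Matrix n n ℂ) c * U = _
    rw [Algebra.algebraMap_eq_smul_one, mul_smul_comm, mul_one, smul_mul_assoc, hU]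
  map_star' x := by simp [StarMul.star_mul, mul_assoc]

private lemma cfc_conj (f : ℝ → ℝ) (M U : Matrix n n ℂ) (hU : star U * U = 1)
    (hU' : U * star U = 1) (hM : IsSelfAdjoint M) (hf : ContinuousOn f (spectrum ℝ M)) :
    cfc f (star U * M * U) = star U * cfc f M * U := by
  have hφ : Continuous (conjSAH U hU hU') := by
    show Continuous fun x : Matrix n n ℂ => star U * x * U
    exact (continuous_const.matrix_mul continuous_id).matrix_mul continuous_const
  have hq : IsSelfAdjoint (star U * M * U) := by
    rw [_root_.IsSelfAdjoint]
    simp [StarMul.star_mul, mul_assoc, hM.star_eq]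
  exact (StarAlgHom.map_cfc (conjSAH U hU hU') f M hf hφ hM hq).symm

end aux

theorem stmt_16 {n : Type*} [Fintype n] [DecidableEq n]
    (A B C : Matrix n n ℂ) (hA : A.PosDef) (hB : B.PosDef)
    (hC : IsUnit C) (hCsa : C.IsHermitian) :
    mpow (C * A * C) (1/2) *
        mlog (mpow (C * A * C) (-(1/2)) * (C * B * C) * mpow (C * A * C) (-(1/2))) *
        mpow (C * A * C) (1/2) =
      C * (mpow A (1/2) * mlog (mpow A (-(1/2)) * B * mpow A (-(1/2))) * mpow A (1/2)) * C := by
  have hCstar : star C = C := hCsa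
  have hP : (C * A * C).PosDef := by
    have h := posDef_conj' hA hC
    rwa [show Cᴴ = C from hCsa] at h
  set P := C * A * C with hPdef
  set Ah := mpow A (1/2) with hAhdef
  set An := mpow A (-(1/2)) with hAndef
  set Ph := mpow P (1/2) with hPhdef
  set Pn := mpow P (-(1/2)) with hPndef
  have hAhAh : Ah * Ah = A := by
    rw [hAhdef, mpow_add' hA, show (1/2 + 1/2 : ℝ) = 1 by norm_num, mpow_one' hA]
  have hAhAn : Ah * An = 1 := by
    rw [hAhdef, hAndef, mpow_add' hA, show (1/2 + -(1/2) : ℝ) = 0 by norm_num, mpow_zero' hA]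
  have hAnAh : An * Ah = 1 := by
    rw [hAhdef, hAndef, mpow_add' hA, show (-(1/2) + 1/2 : ℝ) = 0 by norm_num, mpow_zero' hA]
  have hPnPh : Pn * Ph = 1 := by
    rw [hPhdef, hPndef, mpow_add' hP, show (-(1/2) + 1/2 : ℝ) = 0 by norm_num, mpow_zero' hP]
  have hPhPn : Ph * Pn = 1 := by
    rw [hPhdef, hPndef, mpow_add' hP, show (1/2 + -(1/2) : ℝ) = 0 by norm_num, mpow_zero' hP]
  have hPnP : Pn * P = Ph := by
    conv_lhs => rw [← mpow_one' hP]
    rw [hPndef, hPhdef, mpow_add' hP, show (-(1/2) + 1 : ℝ) = 1/2 by norm_num]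
  set U := Ah * C * Pn with hUdef
  have hsAh : star Ah = Ah := (mpow_isSelfAdjoint _ _).star_eq
  have hsPn : star Pn = Pn := (mpow_isSelfAdjoint _ _).star_eq
  have hsU : star U = Pn * C * Ah := by
    rw [hUdef, StarMul.star_mul, StarMul.star_mul, hsPn, hCstar, hsAh, ← mul_assoc]
  have hU1 : star U * U = 1 := by
    rw [hsU, hUdef]
    have e1 : Ah * (Ah * (C * Pn)) = A * (C * Pn) := by rw [← mul_assoc, hAhAh]
    simp only [mul_assoc, e1]
    have e2 : C * (A * (C * Pn)) = P * Pn := by rw [hPdef]; simp only [← mul_assoc]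
    rw [e2, ← mul_assoc, hPnP, hPhPn]
  have hU2 : U * star U = 1 := by rwa [mul_eq_one_comm] at hU1
  have hUPh : U * Ph = Ah * C := by
    rw [hUdef, mul_assoc, hPnPh, mul_one]
  have hPhsU : Ph * star U = C * Ah := by
    rw [hsU]
    simp only [← mul_assoc]
    rw [hPhPn, one_mul]
  set M := An * B * An with hMdef
  have hAnUnit : IsUnit An := ⟨⟨An, Ah, hAnAh, hAhAn⟩, rfl⟩
  have hMpos : M.PosDef := by
    have h := posDef_conj' hB hAnUnit
    rwa [show Anᴴ = An from (mpow_isSelfAdjoint _ _).star_eq, ← hMdef] at h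
  have hconj : Pn * (C * B * C) * Pn = star U * M * U := by
    rw [hsU, hUdef, hMdef]
    have e1 : ∀ X : Matrix n n ℂ, Ah * (An * X) = X := fun X => by
      rw [← mul_assoc, hAhAn, one_mul]
    have e2 : ∀ X : Matrix n n ℂ, An * (Ah * X) = X := fun X => by
      rw [← mul_assoc, hAnAh, one_mul]
    simp only [mul_assoc, e1, e2]
  rw [hconj]
  have hlog : mlog (star U * M * U) = star U * mlog M * U := by
    unfold mlog
    exact cfc_conj Real.log M U hU1 hU2 hMpos.isHermitian fun x hx =>
      (Real.continuousAt_log (spectrum_pos' hMpos x hx).ne').continuousWithinAt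
  rw [hlog]
  calc Ph * (star U * mlog M * U) * Ph
      = (Ph * star U) * mlog M * (U * Ph) := by simp only [mul_assoc]
    _ = (C * Ah) * mlog M * (Ah * C) := by rw [hPhsU, hUPh]
    _ = C * (Ah * mlog M * Ah) * C := by simp only [mul_assoc]
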